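/- arXiv:0802.2570 — 3 statements merged into one kernel-verified Lean document; each statement's English description precedes it below -/
import Mathlib

section
/- Let n ≥ 2 be an integer and let λ₁, …, λₙ be positive real numbers. Then ∑_{i=1}^n λᵢ⁻¹ ≥ ((∑_{i=1}^n λᵢ) / (∏_{i=1}^n λᵢ))^{1/(n−1)}. -/
open Finset

/-- For positive reals `λ₁, …, λₙ` with `n ≥ 2`,
`∑ λᵢ⁻¹ ≥ ((∑ λᵢ) / (∏ λᵢ))^{1/(n-1)}`. -/
theorem stmt_2 (n : ℕ) (hn : 2 ≤ n) (l : Fin n → ℝ) (hl : ∀ i, 0 < l i) :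
    ((∑ i, l i) / ∏ i, l i) ^ ((1 : ℝ) / ((n : ℝ) - 1)) ≤ ∑ i, (l i)⁻¹ := by
  haveI : NeZero n := ⟨by omega⟩
  set S := ∑ i, (l i)⁻¹ with hS
  have hμ : ∀ i, 0 < (l i)⁻¹ := fun i => inv_pos.2 (hl i)
  have hne : (univ : Finset (Fin n)).Nonempty := univ_nonempty
  have hSpos : 0 < S := Finset.sum_pos (fun i _ => hμ i) hne
  have hprod : 0 < ∏ i, l i := Finset.prod_pos (fun i _ => hl i)
  have hsum : 0 < ∑ i, l i := Finset.sum_pos (fun i _ => hl i) hne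
  have hμle : ∀ j, (l j)⁻¹ ≤ S := fun j =>
    Finset.single_le_sum (fun i _ => (hμ i).le) (mem_univ j)
  -- key polynomial inequality
  have key : (∑ i, l i) / ∏ i, l i ≤ S ^ (n - 1) := by
    have h1 : (∑ i, l i) / ∏ i, l i = ∑ i, ∏ j ∈ univ.erase i, (l j)⁻¹ := by
      rw [Finset.sum_div]
      refine Finset.sum_congr rfl fun i _ => ?_
      rw [Finset.prod_inv_distrib]
      have hme := Finset.mul_prod_erase univ l (mem_univ i)
      have hp : 0 < ∏ j ∈ univ.erase i, l j :=
        Finset.prod_pos (fun j _ => hl j)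
      rw [← hme]
      field_simp
      exact div_self (hl i).ne'
    rw [h1]
    have hterm : ∀ i : Fin n,
        ∏ j ∈ univ.erase i, (l j)⁻¹ ≤ (l (i + 1))⁻¹ * S ^ (n - 2) := by
      intro i
      have hik : i + 1 ≠ i := by
        intro h
        have h1 : (1 : Fin n) = 0 := by
          have := add_left_cancel (a := i) (b := 1) (c := 0) (by simpa using h)
          simpa using this
        rw [Fin.one_eq_zero_iff] at h1
        omega
      have hmem : i + 1 ∈ univ.erase i := Finset.mem_erase.2 ⟨hik, mem_univ _⟩
      have hsplit := Finset.mul_prod_erase (univ.erase i) (fun j => (l j)⁻¹) hmem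
      rw [← hsplit]
      have hcard : ((univ.erase i).erase (i + 1)).card = n - 2 := by
        rw [Finset.card_erase_of_mem hmem, Finset.card_erase_of_mem (mem_univ i),
          Finset.card_univ, Fintype.card_fin]
        omega
      have hbound : ∏ j ∈ (univ.erase i).erase (i + 1), (l j)⁻¹ ≤ S ^ (n - 2) := by
        rw [← hcard]
        calc ∏ j ∈ (univ.erase i).erase (i + 1), (l j)⁻¹
            ≤ ∏ _j ∈ (univ.erase i).erase (i + 1), S :=
              Finset.prod_le_prod (fun j _ => (hμ j).le) (fun j _ => hμle j)
          _ = S ^ ((univ.erase i).erase (i + 1)).card := Finset.prod_const S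
      exact mul_le_mul_of_nonneg_left hbound (hμ _).le
    calc ∑ i, ∏ j ∈ univ.erase i, (l j)⁻¹
        ≤ ∑ i : Fin n, (l (i + 1))⁻¹ * S ^ (n - 2) :=
          Finset.sum_le_sum fun i _ => hterm i
      _ = (∑ i : Fin n, (l (i + 1))⁻¹) * S ^ (n - 2) := by
          rw [Finset.sum_mul]
      _ = S * S ^ (n - 2) := by
          congr 1
          exact Equiv.sum_comp (Equiv.addRight (1 : Fin n)) fun j => (l j)⁻¹
      _ = S ^ (n - 1) := by
          rw [← pow_succ']
          congr 1
          omega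
  -- pass to rpow
  have hdiv : 0 < (∑ i, l i) / ∏ i, l i := div_pos hsum hprod
  have hn2 : (2 : ℝ) ≤ (n : ℝ) := by exact_mod_cast hn
  have hnn : ((n : ℝ) - 1) ≠ 0 := by linarith
  have hkey' : (∑ i, l i) / ∏ i, l i ≤ S ^ ((n : ℝ) - 1) := by
    have : S ^ (n - 1) = S ^ ((n : ℝ) - 1) := by
      rw [← Real.rpow_natCast S (n - 1)]
      congr 1
      have : (1 : ℕ) ≤ n := by omega
      push_cast [Nat.cast_sub this]
      ring
    rwa [← this]
  have hmono := Real.rpow_le_rpow hdiv.le hkey'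
    (one_div_nonneg.mpr (by linarith) : (0:ℝ) ≤ 1 / ((n:ℝ) - 1))
  calc ((∑ i, l i) / ∏ i, l i) ^ ((1 : ℝ) / ((n : ℝ) - 1))
      ≤ (S ^ ((n : ℝ) - 1)) ^ ((1 : ℝ) / ((n : ℝ) - 1)) := hmono
    _ = S := by
        rw [← Real.rpow_mul hSpos.le, mul_one_div, div_self hnn, Real.rpow_one]
end

section
/- Let n ≥ 2 and let A and B be n×n complex Hermitian positive definite matrices. Then trace(B⁻¹A), trace(A⁻¹B), det A and det B are positive real numbers and trace(B⁻¹A) ≥ (trace(A⁻¹B) · det A / det B)^{1/(n−1)}. -/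
open Matrix Finset
open scoped ComplexOrder

lemma key_elem_sym {ι : Type*} [DecidableEq ι] (f : ι → ℝ) (s : Finset ι) (hs : s.Nonempty)
    (hf : ∀ i ∈ s, 0 ≤ f i) :
    ∑ i ∈ s, ∏ j ∈ s.erase i, f j ≤ (∑ i ∈ s, f i) ^ (s.card - 1) := by
  induction hs using Finset.Nonempty.cons_induction with
  | singleton a => simp
  | cons a t ha ht ih =>
    have hfa : 0 ≤ f a := hf a (mem_cons_self a t)
    have hft : ∀ i ∈ t, 0 ≤ f i := fun i hi => hf i (mem_cons.2 (Or.inr hi))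
    have hSt : 0 ≤ ∑ i ∈ t, f i := Finset.sum_nonneg hft
    obtain ⟨m, hm⟩ : ∃ m, t.card = m + 1 :=
      ⟨t.card - 1, (Nat.succ_pred_eq_of_pos (Finset.card_pos.2 ht)).symm⟩
    have hcard : (cons a t ha).card - 1 = m + 1 := by
      simp [Finset.card_cons, hm]
      rw [Finset.card_insert_of_notMem ha, hm]
    have step1 : ∑ i ∈ (cons a t ha), ∏ j ∈ (cons a t ha).erase i, f j
        = (∏ j ∈ t, f j) + f a * ∑ i ∈ t, ∏ j ∈ t.erase i, f j := by
      rw [Finset.sum_cons]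
      congr 1
      · congr 1
        rw [Finset.cons_eq_insert, Finset.erase_insert ha]
      · rw [Finset.mul_sum]
        apply Finset.sum_congr rfl
        intro i hi
        have hia : i ≠ a := fun h => ha (h ▸ hi)
        rw [Finset.cons_eq_insert, Finset.erase_insert_of_ne hia.symm,
          Finset.prod_insert (fun h => ha (Finset.mem_of_mem_erase h))]
    have h1 : ∏ j ∈ t, f j ≤ (∑ i ∈ t, f i) ^ (m + 1) := by
      calc ∏ j ∈ t, f j ≤ ∏ _j ∈ t, ∑ i ∈ t, f i :=
            Finset.prod_le_prod hft (fun x hx => Finset.single_le_sum hft hx)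
        _ = (∑ i ∈ t, f i) ^ (m + 1) := by rw [Finset.prod_const, hm]
    have h2 : ∑ i ∈ t, ∏ j ∈ t.erase i, f j ≤ (∑ i ∈ t, f i) ^ m := by
      have := ih hft
      rwa [hm, Nat.add_sub_cancel] at this
    have h3 : (∑ i ∈ t, f i) ^ (m + 1) + f a * (∑ i ∈ t, f i) ^ m
        ≤ (f a + ∑ i ∈ t, f i) ^ (m + 1) := by
      have : (f a + ∑ i ∈ t, f i) * (∑ i ∈ t, f i) ^ m ≤ (f a + ∑ i ∈ t, f i) ^ (m + 1) := by
        rw [pow_succ']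
        exact mul_le_mul_of_nonneg_left (pow_le_pow_left₀ hSt (le_add_of_nonneg_left hfa) m)
          (by positivity)
      calc (∑ i ∈ t, f i) ^ (m + 1) + f a * (∑ i ∈ t, f i) ^ m
          = (f a + ∑ i ∈ t, f i) * (∑ i ∈ t, f i) ^ m := by ring
        _ ≤ _ := this
    rw [step1, Finset.sum_cons, hcard]
    calc (∏ j ∈ t, f j) + f a * ∑ i ∈ t, ∏ j ∈ t.erase i, f j
        ≤ (∑ i ∈ t, f i) ^ (m + 1) + f a * (∑ i ∈ t, f i) ^ m :=
          add_le_add h1 (mul_le_mul_of_nonneg_left h2 hfa)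
      _ ≤ _ := h3

section spectral
variable {n : ℕ} {M : Matrix (Fin n) (Fin n) ℂ}

lemma trace_eq_sum_eig (hM : M.IsHermitian) :
    M.trace = ((∑ i, hM.eigenvalues i : ℝ) : ℂ) := by
  have hU : (star (hM.eigenvectorUnitary : Matrix (Fin n) (Fin n) ℂ)) *
      (hM.eigenvectorUnitary : Matrix (Fin n) (Fin n) ℂ) = 1 :=
    mem_unitaryGroup_iff'.mp hM.eigenvectorUnitary.2
  conv_lhs => rw [hM.spectral_theorem, Unitary.conjStarAlgAut_apply]
  rw [Matrix.trace_mul_cycle, hU, one_mul, Matrix.trace_diagonal]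
  push_cast
  rfl

lemma conj_inv_aux (U D D' : Matrix (Fin n) (Fin n) ℂ)
    (h1 : star U * U = 1) (h2 : U * star U = 1) (hDD : D * D' = 1) :
    (U * D * star U) * (U * D' * star U) = 1 := by
  rw [mul_assoc (U * D), mul_assoc U D', ← mul_assoc (star U), h1, one_mul,
    mul_assoc U D, ← mul_assoc D, hDD, one_mul, h2]

lemma inv_posdef_eq (hM : M.PosDef) :
    M⁻¹ = (hM.1.eigenvectorUnitary : Matrix (Fin n) (Fin n) ℂ) *
      diagonal (fun i => ((hM.1.eigenvalues i : ℝ) : ℂ)⁻¹) *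
      (star (hM.1.eigenvectorUnitary : Matrix (Fin n) (Fin n) ℂ)) := by
  have hU : (star (hM.1.eigenvectorUnitary : Matrix (Fin n) (Fin n) ℂ)) *
      (hM.1.eigenvectorUnitary : Matrix (Fin n) (Fin n) ℂ) = 1 :=
    mem_unitaryGroup_iff'.mp hM.1.eigenvectorUnitary.2
  have hU' : (hM.1.eigenvectorUnitary : Matrix (Fin n) (Fin n) ℂ) *
      (star (hM.1.eigenvectorUnitary : Matrix (Fin n) (Fin n) ℂ)) = 1 :=
    mem_unitaryGroup_iff.mp hM.1.eigenvectorUnitary.2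
  have hμ : ∀ i, ((hM.1.eigenvalues i : ℝ) : ℂ) ≠ 0 := fun i =>
    Complex.ofReal_ne_zero.2 (hM.eigenvalues_pos i).ne'
  have hDD : diagonal ((RCLike.ofReal : ℝ → ℂ) ∘ hM.1.eigenvalues) *
      diagonal (fun i => ((hM.1.eigenvalues i : ℝ) : ℂ)⁻¹) = 1 := by
    have hfun : (fun i => ((RCLike.ofReal : ℝ → ℂ) ∘ hM.1.eigenvalues) i *
        ((hM.1.eigenvalues i : ℝ) : ℂ)⁻¹) = fun _ => (1 : ℂ) := by
      funext i
      exact mul_inv_cancel₀ (hμ i)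
    rw [diagonal_mul_diagonal, hfun, diagonal_one]
  refine inv_eq_right_inv ?_
  conv_lhs => rw [show M * ((hM.1.eigenvectorUnitary : Matrix (Fin n) (Fin n) ℂ) *
      diagonal (fun i => ((hM.1.eigenvalues i : ℝ) : ℂ)⁻¹) *
      (star (hM.1.eigenvectorUnitary : Matrix (Fin n) (Fin n) ℂ))) =
    ((hM.1.eigenvectorUnitary : Matrix (Fin n) (Fin n) ℂ) *
      diagonal ((RCLike.ofReal : ℝ → ℂ) ∘ hM.1.eigenvalues) *
      (star (hM.1.eigenvectorUnitary : Matrix (Fin n) (Fin n) ℂ))) *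
    ((hM.1.eigenvectorUnitary : Matrix (Fin n) (Fin n) ℂ) *
      diagonal (fun i => ((hM.1.eigenvalues i : ℝ) : ℂ)⁻¹) *
      (star (hM.1.eigenvectorUnitary : Matrix (Fin n) (Fin n) ℂ))) from by
        conv_lhs => enter [1]; rw [hM.1.spectral_theorem, Unitary.conjStarAlgAut_apply]]
  exact conj_inv_aux _ _ _ hU hU' hDD

lemma trace_inv_eq_sum_inv_eig (hM : M.PosDef) :
    M⁻¹.trace = ((∑ i, (hM.1.eigenvalues i)⁻¹ : ℝ) : ℂ) := by
  have hU : (star (hM.1.eigenvectorUnitary : Matrix (Fin n) (Fin n) ℂ)) *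
      (hM.1.eigenvectorUnitary : Matrix (Fin n) (Fin n) ℂ) = 1 :=
    mem_unitaryGroup_iff'.mp hM.1.eigenvectorUnitary.2
  rw [inv_posdef_eq hM, Matrix.trace_mul_cycle, hU, one_mul, Matrix.trace_diagonal]
  push_cast
  rfl

lemma posdef_conj {C : Matrix (Fin n) (Fin n) ℂ} (hM : M.PosDef) (hC : IsUnit C.det) :
    (Cᴴ * M * C).PosDef := by
  refine PosDef.of_dotProduct_mulVec_pos (isHermitian_conjTranspose_mul_mul C hM.1) fun x hx => ?_
  have hCx : C *ᵥ x ≠ 0 := by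
    intro h
    apply hx
    have hinv : C⁻¹ *ᵥ (C *ᵥ x) = x := by
      rw [Matrix.mulVec_mulVec, Matrix.nonsing_inv_mul C hC, Matrix.one_mulVec]
    rw [← hinv, h, Matrix.mulVec_zero]
  have key : (Cᴴ * M * C) *ᵥ x = Cᴴ *ᵥ (M *ᵥ (C *ᵥ x)) := by
    rw [Matrix.mulVec_mulVec, Matrix.mulVec_mulVec]
  rw [key, Matrix.dotProduct_mulVec, ← star_mulVec]
  exact hM.dotProduct_mulVec_pos hCx

end spectral

/-- For `n ≥ 2` and Hermitian positive definite `n×n` complex matrices `A, B`,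
the quantities `trace(B⁻¹A)`, `trace(A⁻¹B)`, `det A`, `det B` are positive
real numbers and `trace(B⁻¹A) ≥ (trace(A⁻¹B) · det A / det B)^{1/(n-1)}`. -/
theorem stmt_3 (n : ℕ) (hn : 2 ≤ n) (A B : Matrix (Fin n) (Fin n) ℂ)
    (hA : A.PosDef) (hB : B.PosDef) :
    ∃ tBA tAB dA dB : ℝ, 0 < tBA ∧ 0 < tAB ∧ 0 < dA ∧ 0 < dB ∧
      (B⁻¹ * A).trace = (tBA : ℂ) ∧ (A⁻¹ * B).trace = (tAB : ℂ) ∧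
      A.det = (dA : ℂ) ∧ B.det = (dB : ℂ) ∧
      (tAB * dA / dB) ^ ((1 : ℝ) / ((n : ℝ) - 1)) ≤ tBA := by
  classical
  haveI : Nonempty (Fin n) := ⟨⟨0, by omega⟩⟩
  set S := (open scoped MatrixOrder in CFC.sqrt B) with hSdef
  have hSH : S.IsHermitian := open scoped MatrixOrder in (CFC.sqrt_nonneg B).posSemidef.1
  have hSS : S * S = B := open scoped MatrixOrder in CFC.sqrt_mul_sqrt_self B hB.posSemidef.nonneg
  have hdetB : IsUnit B.det := hB.det_pos.ne'.isUnit
  have hdetA : IsUnit A.det := hA.det_pos.ne'.isUnit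
  have hdetS : IsUnit S.det := by
    have h : S.det * S.det = B.det := by rw [← det_mul, hSS]
    exact isUnit_of_mul_isUnit_left (h ▸ hdetB)
  have hSinvH : S⁻¹.IsHermitian := hSH.inv
  set M := S⁻¹ * A * S⁻¹ with hMdef
  have hM : M.PosDef := by
    have hdetSinv : IsUnit S⁻¹.det := (Matrix.isUnit_nonsing_inv_det S hdetS)
    have := posdef_conj hA hdetSinv
    rwa [hSinvH.eq] at this
  set μ := hM.1.eigenvalues with hμdef
  have hμpos : ∀ i, 0 < μ i := hM.eigenvalues_pos
  refine ⟨∑ i, μ i, ∑ i, (μ i)⁻¹, ∏ i, hA.1.eigenvalues i, ∏ i, hB.1.eigenvalues i,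
    Finset.sum_pos (fun i _ => hμpos i) univ_nonempty,
    Finset.sum_pos (fun i _ => inv_pos.2 (hμpos i)) univ_nonempty,
    Finset.prod_pos (fun i _ => hA.eigenvalues_pos i),
    Finset.prod_pos (fun i _ => hB.eigenvalues_pos i), ?_, ?_, ?_, ?_, ?_⟩
  · -- trace (B⁻¹ * A) = ∑ μ
    have h1 : B⁻¹ * A = S⁻¹ * (S⁻¹ * A) := by rw [← hSS, Matrix.mul_inv_rev, mul_assoc]
    rw [h1, Matrix.trace_mul_comm, ← hMdef, trace_eq_sum_eig hM.1]
  · -- trace (A⁻¹ * B) = ∑ μ⁻¹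
    have hMinv : M⁻¹ = S * A⁻¹ * S := by
      refine inv_eq_right_inv ?_
      have hassoc : (S⁻¹ * A * S⁻¹) * (S * A⁻¹ * S)
          = S⁻¹ * (A * ((S⁻¹ * S) * (A⁻¹ * S))) := by
        simp only [mul_assoc]
      rw [hassoc, Matrix.nonsing_inv_mul S hdetS, one_mul, ← mul_assoc A,
        Matrix.mul_nonsing_inv A hdetA, one_mul, Matrix.nonsing_inv_mul S hdetS]
    have h2 : A⁻¹ * B = (A⁻¹ * S) * S := by rw [← hSS, mul_assoc]
    rw [h2, Matrix.trace_mul_comm, ← mul_assoc, ← hMinv, trace_inv_eq_sum_inv_eig hM]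
  · rw [hA.1.det_eq_prod_eigenvalues]; norm_cast
  · rw [hB.1.det_eq_prod_eigenvalues]; norm_cast
  · -- the inequality
    set dM : ℝ := ∏ i, μ i with hdMdef
    have hdMpos : 0 < dM := Finset.prod_pos (fun i _ => hμpos i)
    have hMdet : M.det = (dM : ℂ) := by
      rw [hM.1.det_eq_prod_eigenvalues, hdMdef, hμdef]; norm_cast
    have hrel : M.det * B.det = A.det := by
      have h1 : S⁻¹.det * S.det = 1 := by
        rw [← det_mul, Matrix.nonsing_inv_mul S hdetS, det_one]
      rw [← hSS, hMdef]
      calc (S⁻¹ * A * S⁻¹).det * (S * S).det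
          = (S⁻¹.det * S.det) * (S⁻¹.det * S.det) * A.det := by
            simp only [det_mul]; ring
        _ = A.det := by rw [h1]; ring
    have hrelℝ : dM * (∏ i, hB.1.eigenvalues i) = ∏ i, hA.1.eigenvalues i := by
      have := hrel
      rw [hMdet, hB.1.det_eq_prod_eigenvalues, hA.1.det_eq_prod_eigenvalues] at this
      have hRC : ∀ x : ℝ, (RCLike.ofReal x : ℂ) = Complex.ofReal x := fun _ => rfl
      simp only [hRC] at this
      exact_mod_cast this
    have hdBpos : (0:ℝ) < ∏ i, hB.1.eigenvalues i :=
      Finset.prod_pos (fun i _ => hB.eigenvalues_pos i)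
    have hquot : (∑ i, (μ i)⁻¹) * (∏ i, hA.1.eigenvalues i) / (∏ i, hB.1.eigenvalues i)
        = (∑ i, (μ i)⁻¹) * dM := by
      rw [← hrelℝ]
      field_simp
    rw [hquot]
    have hE : (∑ i, (μ i)⁻¹) * dM = ∑ i, ∏ j ∈ univ.erase i, μ j := by
      rw [Finset.sum_mul]
      refine Finset.sum_congr rfl fun i _ => ?_
      rw [hdMdef, ← Finset.mul_prod_erase univ μ (mem_univ i), ← mul_assoc,
        inv_mul_cancel₀ (hμpos i).ne', one_mul]
    rw [hE]
    have hkey : ∑ i, ∏ j ∈ univ.erase i, μ j ≤ (∑ i, μ i) ^ (n - 1) := by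
      have := key_elem_sym μ univ univ_nonempty (fun i _ => (hμpos i).le)
      rwa [Finset.card_univ, Fintype.card_fin] at this
    have hc : (0:ℝ) < (n : ℝ) - 1 := by
      have : (2:ℝ) ≤ n := by exact_mod_cast hn
      linarith
    have hcast : ((n - 1 : ℕ) : ℝ) = (n : ℝ) - 1 := by
      rw [Nat.cast_sub (by omega : 1 ≤ n), Nat.cast_one]
    have hT : (0:ℝ) < ∑ i, μ i := Finset.sum_pos (fun i _ => hμpos i) univ_nonempty
    have hEnn : (0:ℝ) ≤ ∑ i, ∏ j ∈ univ.erase i, μ j :=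
      Finset.sum_nonneg fun i _ => Finset.prod_nonneg fun j _ => (hμpos j).le
    calc (∑ i, ∏ j ∈ univ.erase i, μ j) ^ ((1:ℝ) / ((n:ℝ) - 1))
        ≤ ((∑ i, μ i) ^ (n - 1 : ℕ)) ^ ((1:ℝ) / ((n:ℝ) - 1)) :=
          Real.rpow_le_rpow hEnn hkey (by positivity)
      _ = ((∑ i, μ i) ^ (((n:ℝ) - 1))) ^ ((1:ℝ) / ((n:ℝ) - 1)) := by
          rw [← Real.rpow_natCast (∑ i, μ i) (n - 1), hcast]
      _ = (∑ i, μ i) ^ (((n:ℝ) - 1) * ((1:ℝ) / ((n:ℝ) - 1))) := by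
          rw [← Real.rpow_mul hT.le]
      _ = ∑ i, μ i := by
          rw [mul_one_div, div_self hc.ne', Real.rpow_one]
end

section
/- Let S be a set, let k ≥ 1, d, e be natural numbers, and let f₁, …, f_d : S → ℂ and g₁, …, g_e : S → ℂ be functions. Assume that for every choice of indices i₁, …, i_k ∈ {1, …, d} (repetitions allowed) the pointwise product f_{i₁} · f_{i₂} ⋯ f_{i_k} lies in the ℂ-linear span of g₁, …, g_e inside the vector space of functions S → ℂ. Then there exists a constant C > 0 such that (∑_{i=1}^d |f_i(s)|²)^k ≤ C · ∑_{j=1}^e |g_j(s)|² for all s ∈ S. -/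
open Finset

lemma span_norm_sq_bound {S : Type*} {e : ℕ} (g : Fin e → S → ℂ) (h : S → ℂ)
    (hh : h ∈ Submodule.span ℂ (Set.range g)) :
    ∃ C : ℝ, 0 ≤ C ∧ ∀ s, ‖h s‖ ^ 2 ≤ C * ∑ j, ‖g j s‖ ^ 2 := by
  rw [Submodule.mem_span_range_iff_exists_fun] at hh
  obtain ⟨c, hc⟩ := hh
  refine ⟨∑ j, ‖c j‖ ^ 2, by positivity, fun s => ?_⟩
  have h1 : h s = ∑ j, c j * g j s := by
    rw [← hc]; simp [Finset.sum_apply]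
  calc ‖h s‖ ^ 2 ≤ (∑ j, ‖c j‖ * ‖g j s‖) ^ 2 := by
        rw [h1]
        have h2 : ‖∑ j, c j * g j s‖ ≤ ∑ j, ‖c j‖ * ‖g j s‖ := by
          refine (norm_sum_le _ _).trans ?_
          simp [norm_mul]
        have h3 : (0:ℝ) ≤ ∑ j, ‖c j‖ * ‖g j s‖ := by positivity
        exact pow_le_pow_left₀ (norm_nonneg _) h2 2
    _ ≤ (∑ j, ‖c j‖ ^ 2) * ∑ j, ‖g j s‖ ^ 2 :=
        Finset.sum_mul_sq_le_sq_mul_sq _ _ _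

/-- If every `k`-fold product of the functions `f₁, …, f_d : S → ℂ` lies in the
`ℂ`-linear span of `g₁, …, g_e`, then there is `C > 0` with
`(∑ |fᵢ(s)|²)^k ≤ C ∑ |g_j(s)|²` for all `s`. -/
theorem stmt_5 {S : Type*} (k d e : ℕ) (hk : 1 ≤ k)
    (f : Fin d → S → ℂ) (g : Fin e → S → ℂ)
    (h : ∀ i : Fin k → Fin d,
      (fun s => ∏ j, f (i j) s) ∈ Submodule.span ℂ (Set.range g)) :
    ∃ C : ℝ, 0 < C ∧ ∀ s : S,
      (∑ i, ‖f i s‖ ^ 2) ^ k ≤ C * ∑ j, ‖g j s‖ ^ 2 := by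
  choose C hC0 hC using fun i => span_norm_sq_bound g _ (h i)
  have hCsum : 0 ≤ ∑ i : Fin k → Fin d, C i :=
    Finset.sum_nonneg fun i _ => hC0 i
  refine ⟨(∑ i : Fin k → Fin d, C i) + 1, by linarith, fun s => ?_⟩
  have hG : (0:ℝ) ≤ ∑ j, ‖g j s‖ ^ 2 := by positivity
  have key : (∑ i, ‖f i s‖ ^ 2) ^ k
      = ∑ i : Fin k → Fin d, ‖∏ j, f (i j) s‖ ^ 2 := by
    calc (∑ i, ‖f i s‖ ^ 2) ^ k
        = ∏ _j : Fin k, ∑ i, ‖f i s‖ ^ 2 := by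
          rw [Finset.prod_const, Finset.card_univ, Fintype.card_fin]
      _ = ∑ i ∈ Fintype.piFinset (fun _ : Fin k => (univ : Finset (Fin d))),
            ∏ j, ‖f (i j) s‖ ^ 2 := Finset.prod_univ_sum _ _
      _ = ∑ i : Fin k → Fin d, ‖∏ j, f (i j) s‖ ^ 2 := by
          rw [Fintype.piFinset_univ]
          refine Finset.sum_congr rfl fun i _ => ?_
          rw [norm_prod, Finset.prod_pow]
  rw [key]
  calc ∑ i : Fin k → Fin d, ‖∏ j, f (i j) s‖ ^ 2
      ≤ ∑ i : Fin k → Fin d, C i * ∑ j, ‖g j s‖ ^ 2 :=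
        Finset.sum_le_sum fun i _ => hC i s
    _ = (∑ i : Fin k → Fin d, C i) * ∑ j, ‖g j s‖ ^ 2 := by
        rw [Finset.sum_mul]
    _ ≤ ((∑ i : Fin k → Fin d, C i) + 1) * ∑ j, ‖g j s‖ ^ 2 := by nlinarith
end
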